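/- For any tree T on n vertices with maximum degree Δ and p ≥ 1, A_p(T) ≥ (Δ · ε(v_Δ)^(1−p))^(1/p) · (Δ − 1), where v_Δ is a vertex of maximum degree and ε(v_Δ) its eccentricity. -/

import Mathlib

open Finset

/-- The general Albertson irregularity index. -/
noncomputable def Ap {V : Type*} [Fintype V] (G : SimpleGraph V) [DecidableRel G.Adj]
    (p : ℝ) : ℝ :=
  ((∑ u : V, ∑ v ∈ G.neighborFinset u,
      |(G.degree u : ℝ) - (G.degree v : ℝ)| ^ p) / 2) ^ (1 / p)

/-- The eccentricity of a vertex: the maximum distance from it to any vertex. -/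
noncomputable def ecc {V : Type*} [Fintype V] (G : SimpleGraph V) (v : V) : ℕ :=
  Finset.univ.sup fun w => G.dist v w

section Aux

open SimpleGraph

set_option linter.unusedSectionVars false

variable {V : Type*} [DecidableEq V] {T : SimpleGraph V}

/-- In a tree, every path realizes the distance. -/
lemma tree_path_length (hT : T.IsTree) {a b : V} (P : T.Walk a b) (hP : P.IsPath) :
    P.length = T.dist a b := by
  obtain ⟨Q, hQ, hQl⟩ := hT.isConnected.exists_path_of_dist a b
  rw [(hT.existsUnique_path a b).unique hP hQ, hQl]

/-- Distance splitting along a path in a tree. -/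
lemma tree_dist_split (hT : T.IsTree) {a b y : V} (P : T.Walk a b) (hP : P.IsPath)
    (hy : y ∈ P.support) : T.dist a y + T.dist y b = T.dist a b := by
  have h1 := tree_path_length hT (P.takeUntil y hy) (hP.takeUntil hy)
  have h2 := tree_path_length hT (P.dropUntil y hy) (hP.dropUntil hy)
  have h3 := tree_path_length hT P hP
  rw [← P.take_spec hy, SimpleGraph.Walk.length_append] at h3
  omega

/-- Darts along a path in a tree point away from the start. -/
lemma tree_dart_dist (hT : T.IsTree) {a b : V} (P : T.Walk a b) (hP : P.IsPath) :
    ∀ d ∈ P.darts, T.dist a d.fst + 1 = T.dist a d.snd := by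
  induction P with
  | nil => simp
  | @cons a x b h q ih =>
    intro d hd
    rw [SimpleGraph.Walk.darts_cons, List.mem_cons] at hd
    rcases hd with rfl | hd
    · simp only [SimpleGraph.Walk.IsPath] at *
      have : T.dist a x = 1 := SimpleGraph.dist_eq_one_iff_adj.2 h
      simp [SimpleGraph.dist_self, this]
    · have hq : q.IsPath := hP.of_cons
      have ihd := ih hq d hd
      have key : ∀ y ∈ q.support, T.dist x y + 1 = T.dist a y := by
        intro y hy
        have h1 := tree_dist_split hT q hq hy
        have h2 := tree_dist_split hT (SimpleGraph.Walk.cons h q) hP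
          (by rw [SimpleGraph.Walk.support_cons]; exact List.mem_cons_of_mem _ hy)
        have h3 := tree_path_length hT q hq
        have h4 := tree_path_length hT (SimpleGraph.Walk.cons h q) hP
        rw [SimpleGraph.Walk.length_cons] at h4
        omega
      have k1 := key d.fst (SimpleGraph.Walk.dart_fst_mem_support_of_mem_darts _ hd)
      have k2 := key d.snd (SimpleGraph.Walk.dart_snd_mem_support_of_mem_darts _ hd)
      omega

set_option linter.unusedSectionVars false

/-- If `u` is a neighbor of `r` on the `r`-side of `w`, then the unique path from `r` to `w`
starts with `u`, and every vertex on it other than `r` is also on the `u` side. -/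
lemma tree_branch (hT : T.IsTree) {r u w : V} (hru : T.Adj r u)
    (hw : T.dist u w + 1 = T.dist r w) (P : T.Walk r w) (hP : P.IsPath) :
    P.getVert 1 = u ∧ ∀ y ∈ P.support, y = r ∨ T.dist u y + 1 = T.dist r y := by
  obtain ⟨R, hR, hRl⟩ := hT.isConnected.exists_path_of_dist u w
  have hr_not : r ∉ R.support := by
    intro hr
    have h1 := tree_dist_split hT R hR hr
    have h2 : T.dist u r = 1 := SimpleGraph.dist_eq_one_iff_adj.2 hru.symm
    omega
  have hQ : (SimpleGraph.Walk.cons hru R).IsPath := hR.cons hr_not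
  have hPQ : P = SimpleGraph.Walk.cons hru R := (hT.existsUnique_path r w).unique hP hQ
  subst hPQ
  constructor
  · exact (SimpleGraph.Walk.getVert_cons_succ (n := 0) R hru).trans R.getVert_zero
  · intro y hy
    rw [SimpleGraph.Walk.support_cons, List.mem_cons] at hy
    rcases hy with rfl | hy
    · exact Or.inl rfl
    · right
      have h1 := tree_dist_split hT R hR hy
      have h2 := tree_dist_split hT (SimpleGraph.Walk.cons hru R) (hR.cons hr_not)
        (by rw [SimpleGraph.Walk.support_cons]; exact List.mem_cons_of_mem _ hy)
      have h3 := tree_path_length hT R hR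
      have h4 := tree_path_length hT (SimpleGraph.Walk.cons hru R) (hR.cons hr_not)
      rw [SimpleGraph.Walk.length_cons] at h4
      omega

/-- Two neighbors of `r` on the same side of `w ≠ r` coincide. -/
lemma tree_branch_unique (hT : T.IsTree) {r u u' w : V} (hru : T.Adj r u) (hru' : T.Adj r u')
    (hw : T.dist u w + 1 = T.dist r w) (hw' : T.dist u' w + 1 = T.dist r w) : u = u' := by
  obtain ⟨P, hP, _⟩ := hT.isConnected.exists_path_of_dist r w
  have h1 := (tree_branch hT hru hw P hP).1
  have h2 := (tree_branch hT hru' hw' P hP).1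
  rw [← h1, h2]

/-- A vertex of maximal distance within a branch is a leaf. -/
lemma tree_leaf [Fintype V] [DecidableRel T.Adj] (hT : T.IsTree) {r u l : V} (hru : T.Adj r u)
    (hl : T.dist u l + 1 = T.dist r l)
    (hmax : ∀ w, T.dist u w + 1 = T.dist r w → T.dist r w ≤ T.dist r l) :
    T.degree l = 1 := by
  have hconn := hT.isConnected
  set D := T.dist r l with hD
  have hD1 : 1 ≤ D := by omega
  obtain ⟨P, hP, hPl⟩ := hconn.exists_path_of_dist r l
  set y0 := P.getVert (D - 1) with hy0
  have hy0adj : T.Adj y0 l := by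
    have h1 : D - 1 < P.length := by omega
    have := P.adj_getVert_succ h1
    have h2 : D - 1 + 1 = P.length := by omega
    rw [h2, P.getVert_length] at this
    exact this
  have key : ∀ y, T.Adj l y → y = y0 := by
    intro y hy
    have hdist_ly : T.dist l y = 1 := SimpleGraph.dist_eq_one_iff_adj.2 hy
    have hdist_ul : T.dist u l = D - 1 := by omega
    have htri1 : T.dist r y ≤ D + 1 := by
      have := hconn.dist_triangle (u := r) (v := l) (w := y); omega
    by_cases hge : D + 1 ≤ T.dist r y
    · exfalso
      have htri2 : T.dist u y ≤ D := by
        have := hconn.dist_triangle (u := u) (v := l) (w := y)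
        have h2 : T.dist l y = 1 := hdist_ly
        omega
      have htri3 : T.dist r y ≤ 1 + T.dist u y := by
        have := hconn.dist_triangle (u := r) (v := u) (w := y)
        have h2 : T.dist r u = 1 := SimpleGraph.dist_eq_one_iff_adj.2 hru
        omega
      have : T.dist u y + 1 = T.dist r y := by omega
      have := hmax y this
      omega
    · push_neg at hge
      obtain ⟨Q, hQ, hQl⟩ := hconn.exists_path_of_dist r y
      by_cases hmem : l ∈ Q.support
      · exfalso
        have := tree_dist_split hT Q hQ hmem
        omega
      · have hQ' : (Q.concat hy.symm).IsPath := by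
          rw [← SimpleGraph.Walk.isPath_reverse_iff, SimpleGraph.Walk.reverse_concat]
          refine hQ.reverse.cons ?_
          rwa [SimpleGraph.Walk.support_reverse, List.mem_reverse]
        have hPQ : P = Q.concat hy.symm := (hT.existsUnique_path r l).unique hP hQ'
        have hQlen : Q.length = D - 1 := by
          have := congrArg SimpleGraph.Walk.length hPQ
          rw [SimpleGraph.Walk.length_concat] at this
          omega
        rw [hy0, hPQ, SimpleGraph.Walk.concat_eq_append,
          SimpleGraph.Walk.getVert_append]
        simp [hQlen]
  have hsub : T.neighborFinset l = {y0} := by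
    ext y
    simp only [SimpleGraph.mem_neighborFinset, Finset.mem_singleton]
    exact ⟨fun h => key y h, fun h => h ▸ hy0adj.symm⟩
  rw [← SimpleGraph.card_neighborFinset_eq_degree, hsub, Finset.card_singleton]

/-- Telescoping triangle inequality along a walk. -/
lemma telescope [Fintype V] [DecidableRel T.Adj] {a b : V} (W : T.Walk a b) :
    |(T.degree a : ℝ) - T.degree b| ≤
      (W.darts.map (fun d => |(T.degree d.fst : ℝ) - T.degree d.snd|)).sum := by
  induction W with
  | nil => simp
  | @cons a x b h q ih =>
    rw [SimpleGraph.Walk.darts_cons, List.map_cons, List.sum_cons]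
    calc |(T.degree a : ℝ) - T.degree b|
        ≤ |(T.degree a : ℝ) - T.degree x| + |(T.degree x : ℝ) - T.degree b| :=
          abs_sub_le _ _ _
      _ ≤ _ := by exact add_le_add_right ih _

/-- Power mean inequality (Jensen). -/
lemma sum_rpow_ge {ι : Type*} {s : Finset ι} (hs : s.Nonempty) (z : ι → ℝ)
    (hz : ∀ i ∈ s, 0 ≤ z i) {p : ℝ} (hp : 1 ≤ p) :
    (∑ i ∈ s, z i) ^ p * (s.card : ℝ) ^ (1 - p) ≤ ∑ i ∈ s, z i ^ p := by
  have hn : (0 : ℝ) < s.card := by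
    exact_mod_cast Finset.card_pos.2 hs
  have hw : ∀ i ∈ s, (0:ℝ) ≤ (s.card : ℝ)⁻¹ := fun _ _ => by positivity
  have hw' : ∑ _i ∈ s, (s.card : ℝ)⁻¹ = 1 := by
    rw [Finset.sum_const, nsmul_eq_mul, mul_inv_cancel₀ hn.ne']
  have hJ := Real.rpow_arith_mean_le_arith_mean_rpow s (fun _ => (s.card : ℝ)⁻¹) z hw hw' hz hp
  rw [← Finset.mul_sum, ← Finset.mul_sum] at hJ
  have hzsum : 0 ≤ ∑ i ∈ s, z i := Finset.sum_nonneg hz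
  rw [Real.mul_rpow (by positivity) hzsum] at hJ
  have hip : (s.card : ℝ)⁻¹ ^ p = ((s.card : ℝ) ^ p)⁻¹ := Real.inv_rpow hn.le p
  rw [hip] at hJ
  have h2 : (s.card : ℝ) ^ (1 - p) = s.card / (s.card : ℝ) ^ p := by
    rw [Real.rpow_sub hn, Real.rpow_one]
  rw [h2]
  calc (∑ i ∈ s, z i) ^ p * ((s.card : ℝ) / (s.card : ℝ) ^ p)
      = (s.card : ℝ) * (((s.card : ℝ) ^ p)⁻¹ * (∑ i ∈ s, z i) ^ p) := by ring
    _ ≤ (s.card : ℝ) * (((s.card : ℝ))⁻¹ * ∑ i ∈ s, z i ^ p) :=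
        mul_le_mul_of_nonneg_left hJ hn.le
    _ = ∑ i ∈ s, z i ^ p := by field_simp

/-- The neighbor double sum equals a sum over darts. -/
lemma sum_darts [Fintype V] [DecidableRel T.Adj] (F : V → V → ℝ) :
    ∑ u : V, ∑ v ∈ T.neighborFinset u, F u v = ∑ d : T.Dart, F d.fst d.snd := by
  rw [Finset.sum_sigma']
  exact Finset.sum_bij'
    (fun x hx => (⟨(x.1, x.2), by
      have := (Finset.mem_sigma.1 hx).2
      rwa [SimpleGraph.mem_neighborFinset] at this⟩ : T.Dart))
    (fun d _ => ⟨d.fst, d.snd⟩)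
    (fun x hx => Finset.mem_univ _)
    (fun d _ => Finset.mem_sigma.2 ⟨Finset.mem_univ _, by
      rw [SimpleGraph.mem_neighborFinset]; exact d.adj⟩)
    (fun x hx => rfl)
    (fun d _ => rfl)
    (fun x hx => rfl)


/-- The key branch bound. -/
lemma branch_bound [Fintype V] [DecidableRel T.Adj] (hT : T.IsTree) {p : ℝ} (hp : 1 ≤ p)
    {r u : V} (hadj : T.Adj r u) :
    ∃ E : Finset T.Dart,
      (∀ d ∈ E,
        (T.dist r d.fst + 1 = T.dist r d.snd ∧ T.dist u d.snd + 1 = T.dist r d.snd)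
        ∨ (T.dist r d.snd + 1 = T.dist r d.fst ∧ T.dist u d.fst + 1 = T.dist r d.fst))
      ∧ 2 * (|(T.degree r : ℝ) - 1| ^ p * (ecc T r : ℝ) ^ (1 - p)) ≤
          ∑ d ∈ E, |(T.degree d.fst : ℝ) - T.degree d.snd| ^ p := by
  classical
  have hconn := hT.isConnected
  -- choose the far leaf in the branch of u
  have hu1 : T.dist r u = 1 := SimpleGraph.dist_eq_one_iff_adj.2 hadj
  have huB : u ∈ Finset.univ.filter (fun w => T.dist u w + 1 = T.dist r w) := by
    simp [SimpleGraph.dist_self, hu1]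
  obtain ⟨l, hlB, hlmax⟩ := Finset.exists_max_image
    (Finset.univ.filter (fun w => T.dist u w + 1 = T.dist r w))
    (fun w => T.dist r w) ⟨u, huB⟩
  rw [Finset.mem_filter] at hlB
  have hlb : T.dist u l + 1 = T.dist r l := hlB.2
  have hmax' : ∀ w, T.dist u w + 1 = T.dist r w → T.dist r w ≤ T.dist r l := by
    intro w hw
    exact hlmax w (by simp [hw])
  have hleaf : T.degree l = 1 := tree_leaf hT hadj hlb hmax'
  obtain ⟨P, hP, hPl⟩ := hconn.exists_path_of_dist r l
  set D := T.dist r l with hD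
  have hD1 : 1 ≤ D := by omega
  have hDecc : D ≤ ecc T r := by
    rw [ecc]
    exact Finset.le_sup (f := fun w => T.dist r w) (Finset.mem_univ l)
  have hnd : P.darts.Nodup :=
    SimpleGraph.Walk.darts_nodup_of_support_nodup hP.support_nodup
  have hnd2 : (P.darts.map SimpleGraph.Dart.symm).Nodup :=
    hnd.map (SimpleGraph.Dart.symm_involutive.injective)
  -- directional facts about darts of P
  have hdir : ∀ d ∈ P.darts, T.dist r d.fst + 1 = T.dist r d.snd ∧
      T.dist u d.snd + 1 = T.dist r d.snd := by
    intro d hd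
    have h1 := tree_dart_dist hT P hP d hd
    have h2 := (tree_branch hT hadj hlb P hP).2 d.snd
      (SimpleGraph.Walk.dart_snd_mem_support_of_mem_darts P hd)
    refine ⟨h1, ?_⟩
    rcases h2 with h2 | h2
    · exfalso
      rw [h2] at h1
      simp [SimpleGraph.dist_self] at h1
    · exact h2
  refine ⟨P.darts.toFinset ∪ (P.darts.map SimpleGraph.Dart.symm).toFinset, ?_, ?_⟩
  · intro d hd
    rw [Finset.mem_union, List.mem_toFinset, List.mem_toFinset, List.mem_map] at hd
    rcases hd with hd | ⟨d', hd', rfl⟩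
    · exact Or.inl (hdir d hd)
    · exact Or.inr (hdir d' hd')
  · -- the sum bound
    set z : T.Dart → ℝ := fun d => |(T.degree d.fst : ℝ) - T.degree d.snd| with hz
    have hz0 : ∀ d, 0 ≤ z d := fun d => abs_nonneg _
    have hdisj : Disjoint P.darts.toFinset (P.darts.map SimpleGraph.Dart.symm).toFinset := by
      rw [Finset.disjoint_left]
      intro d hd hd'
      rw [List.mem_toFinset] at hd hd'
      obtain ⟨d', hd'2, rfl⟩ := List.mem_map.1 hd'
      have h1 := (hdir _ hd).1
      have h2 := (hdir _ hd'2).1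
      have e1 : (d'.symm).fst = d'.snd := rfl
      have e2 : (d'.symm).snd = d'.fst := rfl
      rw [e1, e2] at h1
      omega
    rw [Finset.sum_union hdisj]
    have hsym : ∑ d ∈ (P.darts.map SimpleGraph.Dart.symm).toFinset, z d ^ p
        = ∑ d ∈ P.darts.toFinset, z d ^ p := by
      rw [List.sum_toFinset _ hnd2, List.sum_toFinset _ hnd, List.map_map]
      congr 1
      apply List.map_congr_left
      intro d _
      simp only [Function.comp_apply, hz]
      rw [abs_sub_comm]
      rfl
    rw [hsym, ← two_mul]
    have hmono : 2 * (|(T.degree r : ℝ) - 1| ^ p * (ecc T r : ℝ) ^ (1 - p)) ≤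
        2 * ∑ d ∈ P.darts.toFinset, z d ^ p := by
      gcongr 2 * ?_
      -- Jensen + telescoping
      have hne : P.darts.toFinset.Nonempty := by
        rw [List.toFinset_nonempty_iff]
        intro h
        have := SimpleGraph.Walk.length_darts P
        rw [h] at this
        simp at this
        omega
      have hJ := sum_rpow_ge hne z (fun d _ => hz0 d) hp
      have hcard : (P.darts.toFinset.card : ℝ) = (D : ℝ) := by
        rw [List.toFinset_card_of_nodup hnd]
        rw [SimpleGraph.Walk.length_darts, hPl]
      have htel : |(T.degree r : ℝ) - 1| ≤ ∑ d ∈ P.darts.toFinset, z d := by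
        rw [List.sum_toFinset _ hnd]
        have h := telescope P
        rw [hleaf, Nat.cast_one] at h
        simpa [hz] using h
      have hzsum : (0:ℝ) ≤ ∑ d ∈ P.darts.toFinset, z d :=
        Finset.sum_nonneg fun d _ => hz0 d
      calc |(T.degree r : ℝ) - 1| ^ p * (ecc T r : ℝ) ^ (1 - p)
          ≤ (∑ d ∈ P.darts.toFinset, z d) ^ p * (D : ℝ) ^ (1 - p) := by
            apply mul_le_mul
            · exact Real.rpow_le_rpow (abs_nonneg _) htel (by linarith)
            · apply Real.rpow_le_rpow_of_nonpos
              · exact_mod_cast hD1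
              · exact_mod_cast hDecc
              · linarith
            · exact Real.rpow_nonneg (by positivity) _
            · exact Real.rpow_nonneg hzsum _
        _ = (∑ d ∈ P.darts.toFinset, z d) ^ p * (P.darts.toFinset.card : ℝ) ^ (1 - p) := by
            rw [hcard]
        _ ≤ ∑ d ∈ P.darts.toFinset, z d ^ p := hJ
    exact hmono

end Aux

theorem stmt15 {V : Type*} [Fintype V]
    (T : SimpleGraph V) [DecidableRel T.Adj] (hT : T.IsTree)
    (Δ : ℕ) (hΔ : ∀ v : V, T.degree v ≤ Δ) (vΔ : V) (hvΔ : T.degree vΔ = Δ)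
    (p : ℝ) (hp : 1 ≤ p) :
    ((Δ : ℝ) * (ecc T vΔ : ℝ) ^ (1 - p)) ^ (1 / p) * ((Δ : ℝ) - 1) ≤ Ap T p := by
  classical
  have hp0 : (0:ℝ) < p := lt_of_lt_of_le one_pos hp
  set f : T.Dart → ℝ := fun d => |(T.degree d.fst : ℝ) - T.degree d.snd| ^ p with hf
  have hf0 : ∀ d, 0 ≤ f d := fun d => Real.rpow_nonneg (abs_nonneg _) _
  have hAp : Ap T p = ((∑ d : T.Dart, f d) / 2) ^ (1/p) := by
    rw [Ap, sum_darts (fun u v => |(T.degree u : ℝ) - (T.degree v : ℝ)| ^ p)]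
  have hsum0 : (0:ℝ) ≤ ∑ d : T.Dart, f d := Finset.sum_nonneg fun d _ => hf0 d
  have hApnn : (0:ℝ) ≤ Ap T p := by
    rw [hAp]
    apply Real.rpow_nonneg
    linarith
  rcases Nat.lt_or_ge Δ 2 with hΔ2 | hΔ2
  · interval_cases Δ
    · rw [Nat.cast_zero, zero_mul, Real.zero_rpow (one_div_ne_zero hp0.ne'), zero_mul]
      exact hApnn
    · rw [Nat.cast_one, sub_self, mul_zero]
      exact hApnn
  · have hΔR : (2:ℝ) ≤ (Δ:ℝ) := by exact_mod_cast hΔ2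
    have hΔ1R : (0:ℝ) ≤ (Δ:ℝ) - 1 := by linarith
    have habs : |(T.degree vΔ : ℝ) - 1| = (Δ:ℝ) - 1 := by
      rw [hvΔ, abs_of_nonneg hΔ1R]
    set N := T.neighborFinset vΔ with hN
    have hNcard : N.card = Δ := by
      rw [hN, T.card_neighborFinset_eq_degree vΔ, hvΔ]
    have hbr : ∀ u : V, ∃ Eu : Finset T.Dart, T.Adj vΔ u →
        ((∀ d ∈ Eu,
          (T.dist vΔ d.fst + 1 = T.dist vΔ d.snd ∧ T.dist u d.snd + 1 = T.dist vΔ d.snd)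
          ∨ (T.dist vΔ d.snd + 1 = T.dist vΔ d.fst ∧ T.dist u d.fst + 1 = T.dist vΔ d.fst))
        ∧ 2 * (|(T.degree vΔ : ℝ) - 1| ^ p * (ecc T vΔ : ℝ) ^ (1 - p)) ≤
            ∑ d ∈ Eu, |(T.degree d.fst : ℝ) - T.degree d.snd| ^ p) := by
      intro u
      by_cases h : T.Adj vΔ u
      · obtain ⟨Eu, h1, h2⟩ := branch_bound hT hp h
        exact ⟨Eu, fun _ => ⟨h1, h2⟩⟩
      · exact ⟨∅, fun h' => absurd h' h⟩
    choose E hE using hbr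
    have hdisj : (↑N : Set V).PairwiseDisjoint E := by
      intro u hu u' hu' hne
      rw [Finset.mem_coe, hN, SimpleGraph.mem_neighborFinset] at hu hu'
      simp only [Function.onFun]
      rw [Finset.disjoint_left]
      intro d hd hd'
      have s1 := ((hE u hu).1) d hd
      have s2 := ((hE u' hu').1) d hd'
      rcases s1 with ⟨a1, b1⟩ | ⟨a1, b1⟩ <;> rcases s2 with ⟨a2, b2⟩ | ⟨a2, b2⟩
      · exact hne (tree_branch_unique hT hu hu' b1 b2)
      · omega
      · omega
      · exact hne (tree_branch_unique hT hu hu' b1 b2)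
    have hsum : ∑ u ∈ N, ∑ d ∈ E u, f d ≤ ∑ d : T.Dart, f d := by
      rw [← Finset.sum_biUnion hdisj]
      exact Finset.sum_le_sum_of_subset_of_nonneg (Finset.subset_univ _) fun d _ _ => hf0 d
    have hlower : (Δ:ℝ) * (2 * (((Δ:ℝ)-1)^p * (ecc T vΔ : ℝ)^(1-p))) ≤
        ∑ u ∈ N, ∑ d ∈ E u, f d := by
      have hterm : ∀ u ∈ N, 2 * (((Δ:ℝ)-1)^p * (ecc T vΔ : ℝ)^(1-p)) ≤ ∑ d ∈ E u, f d := by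
        intro u hu
        rw [hN, SimpleGraph.mem_neighborFinset] at hu
        have h := (hE u hu).2
        rwa [habs] at h
      calc (Δ:ℝ) * (2 * (((Δ:ℝ)-1)^p * (ecc T vΔ : ℝ)^(1-p)))
          = ∑ _u ∈ N, 2 * (((Δ:ℝ)-1)^p * (ecc T vΔ : ℝ)^(1-p)) := by
            rw [Finset.sum_const, hNcard, nsmul_eq_mul]
        _ ≤ ∑ u ∈ N, ∑ d ∈ E u, f d := Finset.sum_le_sum hterm
    have hkey : (Δ:ℝ) * (((Δ:ℝ)-1)^p * (ecc T vΔ : ℝ)^(1-p)) ≤ (∑ d : T.Dart, f d) / 2 := by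
      linarith
    rw [hAp]
    have hbase : (0:ℝ) ≤ (Δ:ℝ) * (((Δ:ℝ)-1)^p * (ecc T vΔ : ℝ)^(1-p)) := by positivity
    have h1 : ((Δ:ℝ) * (((Δ:ℝ)-1)^p * (ecc T vΔ : ℝ)^(1-p))) ^ (1/p)
        ≤ ((∑ d : T.Dart, f d) / 2) ^ (1/p) :=
      Real.rpow_le_rpow hbase hkey (by positivity)
    refine le_trans (le_of_eq ?_) h1
    have e1 : (Δ:ℝ) * (((Δ:ℝ)-1)^p * (ecc T vΔ : ℝ)^(1-p))
        = ((Δ:ℝ) * (ecc T vΔ : ℝ)^(1-p)) * ((Δ:ℝ)-1)^p := by ring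
    rw [e1, Real.mul_rpow (by positivity) (Real.rpow_nonneg hΔ1R p),
      ← Real.rpow_mul hΔ1R, mul_one_div_cancel hp0.ne', Real.rpow_one]
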